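/- Let n > 2 and let m, a_1, ..., a_n be nonzero integers satisfying gcd(m²·a_1, ..., m²·a_{n-1}, m²·a_n + 1) = 1. Then there exist integers x_1, ..., x_{n-2} such that gcd(m²·a_1 + x_1·m³·a_3 + ... + x_{n-3}·m³·a_{n-1} + x_{n-2}·m·(m²·a_n + 1), m²·a_2) = m. -/

import Mathlib

/-- Bézout's lemma for a finite family of integers. -/
lemma finset_gcd_bezout {ι : Type*} [DecidableEq ι] (s : Finset ι) (b : ι → ℤ) :
    ∃ u : ι → ℤ, ∑ i ∈ s, u i * b i = s.gcd b := by
  induction s using Finset.induction_on with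
  | empty => exact ⟨0, by simp⟩
  | @insert j s hj ih =>
      obtain ⟨u, hu⟩ := ih
      refine ⟨Function.update (fun i => Int.gcdB (b j) (s.gcd b) * u i) j
        (Int.gcdA (b j) (s.gcd b)), ?_⟩
      rw [Finset.sum_insert hj, Finset.gcd_insert, ← Int.coe_gcd,
        Int.gcd_eq_gcd_ab (b j) (s.gcd b), Function.update_self]
      have hsum : ∑ i ∈ s, Function.update (fun i => Int.gcdB (b j) (s.gcd b) * u i) j
          (Int.gcdA (b j) (s.gcd b)) i * b i
          = Int.gcdB (b j) (s.gcd b) * ∑ i ∈ s, u i * b i := by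
        rw [Finset.mul_sum]
        refine Finset.sum_congr rfl fun i hi => ?_
        rw [Function.update_of_ne (ne_of_mem_of_not_mem hi hj)]
        ring
      rw [hsum, hu]
      ring

/-- One-step gcd improvement: if no prime divides `a`, `b`, `d` simultaneously and
`d ≠ 0`, there is `x` with `gcd (a + x*b) d = 1`. -/
lemma exists_gcd_add_mul_eq_one (a b d : ℤ) (hd : d ≠ 0)
    (H : ∀ p : ℕ, p.Prime → (p : ℤ) ∣ a → (p : ℤ) ∣ b → (p : ℤ) ∣ d → False) :
    ∃ x : ℤ, Int.gcd (a + x * b) d = 1 := by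
  classical
  set x : ℤ := ∏ p ∈ d.natAbs.primeFactors.filter (fun p : ℕ => ¬ ((p : ℤ) ∣ a)), (p : ℤ) with hx
  refine ⟨x, ?_⟩
  by_contra hne
  set g : ℕ := Int.gcd (a + x * b) d with hg
  have hgne : g ≠ 1 := hne
  have hg0 : g ≠ 0 := by
    intro h0
    exact hd (Int.natAbs_eq_zero.mp (Nat.eq_zero_of_gcd_eq_zero_right (hg ▸ h0)))
  set q : ℕ := g.minFac with hq
  have hqp : q.Prime := Nat.minFac_prime hgne
  have hqg : (q : ℤ) ∣ (g : ℤ) := Int.natCast_dvd_natCast.mpr (Nat.minFac_dvd g)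
  have hq1 : (q : ℤ) ∣ a + x * b := hqg.trans (Int.gcd_dvd_left _ _)
  have hq2 : (q : ℤ) ∣ d := hqg.trans (Int.gcd_dvd_right _ _)
  have hqprime : Prime (q : ℤ) := Nat.prime_iff_prime_int.mp hqp
  by_cases hqa : (q : ℤ) ∣ a
  · -- then q ∤ b and q ∤ x, contradiction with q ∣ x * b
    have hqb : ¬ (q : ℤ) ∣ b := fun h => H q hqp hqa h hq2
    have hqx : ¬ (q : ℤ) ∣ x := by
      intro h
      obtain ⟨p, hp, hdvd⟩ := (hqprime.dvd_finset_prod_iff _).mp h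
      rw [Finset.mem_filter] at hp
      have : q = p := (Nat.prime_dvd_prime_iff_eq hqp
        (Nat.mem_primeFactors.mp hp.1).1).mp (Int.natCast_dvd_natCast.mp hdvd)
      exact hp.2 (this ▸ hqa)
    have : (q : ℤ) ∣ x * b := (dvd_add_right hqa).mp hq1
    rcases hqprime.dvd_mul.mp this with h | h
    · exact hqx h
    · exact hqb h
  · -- then q divides x, hence q ∣ a, contradiction
    have hqmem : q ∈ d.natAbs.primeFactors.filter (fun p : ℕ => ¬ ((p : ℤ) ∣ a)) := by
      refine Finset.mem_filter.mpr ⟨Nat.mem_primeFactors.mpr ⟨hqp, ?_, ?_⟩, hqa⟩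
      · exact Int.natCast_dvd.mp hq2
      · simpa using hd
    have hqx : (q : ℤ) ∣ x := Finset.dvd_prod_of_mem _ hqmem
    exact hqa ((dvd_add_right (hqx.mul_right b)).mp (by rwa [add_comm] at hq1))

/-- Multi-step version for a finite family. -/
lemma exists_gcd_add_sum_eq_one {ι : Type*} [DecidableEq ι] (s : Finset ι) (b : ι → ℤ)
    (a d : ℤ) (hd : d ≠ 0)
    (H : ∀ p : ℕ, p.Prime → (p : ℤ) ∣ a → (p : ℤ) ∣ d →
      (∀ i ∈ s, (p : ℤ) ∣ b i) → False) :
    ∃ x : ι → ℤ, Int.gcd (a + ∑ i ∈ s, x i * b i) d = 1 := by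
  obtain ⟨u, hu⟩ := finset_gcd_bezout s b
  obtain ⟨y, hy⟩ := exists_gcd_add_mul_eq_one a (s.gcd b) d hd
    (fun p hp hpa hpg hpd => H p hp hpa hpd
      (fun i hi => hpg.trans (Finset.gcd_dvd hi)))
  refine ⟨fun i => y * u i, ?_⟩
  have hsum : ∑ i ∈ s, (y * u i) * b i = y * s.gcd b := by
    rw [← hu, Finset.mul_sum]
    exact Finset.sum_congr rfl fun i _ => by ring
  rwa [hsum]

/-- If `m, a 1, ..., a n` (n > 2) are nonzero integers with
`gcd(m²*a 1, ..., m²*a (n-1), m²*a n + 1) = 1`, then there are integers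
`x 1, ..., x (n-2)` such that
`gcd(m²*a 1 + x 1*m³*a 3 + ⋯ + x (n-3)*m³*a (n-1) + x (n-2)*m*(m²*a n + 1), m²*a 2) = m`
(here `gcd` is the nonnegative gcd, and the right-hand side is `|m|`). -/
theorem gcd_exactly_m (n : ℕ) (hn : 2 < n) (m : ℤ) (hm : m ≠ 0)
    (a : ℕ → ℤ) (ha : ∀ i ∈ Finset.Icc 1 n, a i ≠ 0)
    (hgcd : Finset.gcd (Finset.Icc 1 n)
      (fun i => if i = n then m ^ 2 * a n + 1 else m ^ 2 * a i) = 1) :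
    ∃ x : ℕ → ℤ,
      Int.gcd
        (m ^ 2 * a 1 + (∑ i ∈ Finset.Icc 1 (n - 3), x i * m ^ 3 * a (i + 2))
          + x (n - 2) * m * (m ^ 2 * a n + 1))
        (m ^ 2 * a 2) = m.natAbs := by
  classical
  set c : ℤ := m ^ 2 * a n + 1 with hc
  set b : ℕ → ℤ := fun i => if i = n - 2 then c else m ^ 2 * a (i + 2) with hb
  have ha2 : a 2 ≠ 0 := ha 2 (Finset.mem_Icc.mpr ⟨by omega, by omega⟩)
  have hd : m * a 2 ≠ 0 := mul_ne_zero hm ha2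
  have H : ∀ p : ℕ, p.Prime → (p : ℤ) ∣ m * a 1 → (p : ℤ) ∣ m * a 2 →
      (∀ i ∈ Finset.Icc 1 (n - 2), (p : ℤ) ∣ b i) → False := by
    intro p hp hp1 hp2 hpb
    have hpprime : Prime (p : ℤ) := Nat.prime_iff_prime_int.mp hp
    have hpc : (p : ℤ) ∣ c := by
      have := hpb (n - 2) (Finset.mem_Icc.mpr ⟨by omega, le_refl _⟩)
      simpa [hb] using this
    have hpm : ¬ (p : ℤ) ∣ m := by
      intro h
      have h1 : (p : ℤ) ∣ m ^ 2 * a n := dvd_mul_of_dvd_left (dvd_pow h two_ne_zero) _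
      have : (p : ℤ) ∣ 1 := by
        have := dvd_sub hpc h1
        simpa [hc] using this
      exact hpprime.not_dvd_one this
    have hpa1 : (p : ℤ) ∣ a 1 := (hpprime.dvd_mul.mp hp1).resolve_left hpm
    have hpa2 : (p : ℤ) ∣ a 2 := (hpprime.dvd_mul.mp hp2).resolve_left hpm
    have : (p : ℤ) ∣ Finset.gcd (Finset.Icc 1 n)
        (fun i => if i = n then m ^ 2 * a n + 1 else m ^ 2 * a i) := by
      refine Finset.dvd_gcd fun i hi => ?_
      rw [Finset.mem_Icc] at hi
      by_cases hin : i = n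
      · simpa [hin] using hpc
      · simp only [if_neg hin]
        rcases Nat.lt_or_ge i 3 with h3 | h3
        · have h12 : i = 1 ∨ i = 2 := by omega
          rcases h12 with rfl | rfl
          · exact dvd_mul_of_dvd_right hpa1 _
          · exact dvd_mul_of_dvd_right hpa2 _
        · have hi2 : i - 2 ∈ Finset.Icc 1 (n - 2) :=
            Finset.mem_Icc.mpr ⟨by omega, by omega⟩
          have := hpb (i - 2) hi2
          have hne : i - 2 ≠ n - 2 := by omega
          rw [hb] at this
          simp only [if_neg hne] at this
          have : (p : ℤ) ∣ m ^ 2 * a (i - 2 + 2) := this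
          rwa [show i - 2 + 2 = i by omega] at this
    rw [hgcd] at this
    exact hpprime.not_dvd_one this
  obtain ⟨x, hx⟩ := exists_gcd_add_sum_eq_one (Finset.Icc 1 (n - 2)) b (m * a 1) (m * a 2) hd H
  refine ⟨x, ?_⟩
  have hsplit : ∑ i ∈ Finset.Icc 1 (n - 2), x i * b i
      = (∑ i ∈ Finset.Icc 1 (n - 3), x i * (m ^ 2 * a (i + 2))) + x (n - 2) * c := by
    have e : n - 2 = (n - 3) + 1 := by omega
    have hins : Finset.Icc 1 (n - 2) = insert (n - 2) (Finset.Icc 1 (n - 3)) := by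
      rw [e, ← Finset.insert_Icc_right_eq_Icc_add_one (by omega : 1 ≤ n - 3 + 1)]
    have hnotmem : n - 2 ∉ Finset.Icc 1 (n - 3) := by
      simp only [Finset.mem_Icc]; omega
    rw [hins, Finset.sum_insert hnotmem, hb]
    simp only [if_pos rfl]
    rw [add_comm]
    congr 1
    refine Finset.sum_congr rfl fun i hi => ?_
    rw [Finset.mem_Icc] at hi
    rw [if_neg (by omega : i ≠ n - 2)]
  have hfirst : m ^ 2 * a 1 + (∑ i ∈ Finset.Icc 1 (n - 3), x i * m ^ 3 * a (i + 2))
      + x (n - 2) * m * (m ^ 2 * a n + 1)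
      = m * (m * a 1 + ∑ i ∈ Finset.Icc 1 (n - 2), x i * b i) := by
    have hsum2 : m * ∑ i ∈ Finset.Icc 1 (n - 3), x i * (m ^ 2 * a (i + 2))
        = ∑ i ∈ Finset.Icc 1 (n - 3), x i * m ^ 3 * a (i + 2) := by
      rw [Finset.mul_sum]
      exact Finset.sum_congr rfl fun i _ => by ring
    rw [hsplit, mul_add m (m * a 1), mul_add m, ← hsum2]
    ring
  rw [hfirst, show m ^ 2 * a 2 = m * (m * a 2) by ring, Int.gcd_mul_left, hx, mul_one]
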